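/- Let μ and ν be probability distributions on a measurable space such that for every measurable set S, μ(S) ≤ e^ε ν(S) + δ and ν(S) ≤ e^ε μ(S) + δ, with ε ∈ [0,1]. Let g be a measurable function into [0, M]. Then |E_μ[g] − E_ν[g]| ≤ (e^ε − 1 + δ)M. -/

import Mathlib

open MeasureTheory

lemma one_side_maxKL
    {Ω : Type*} [MeasurableSpace Ω] (μ ν : Measure Ω)
    [IsProbabilityMeasure μ] [IsProbabilityMeasure ν]
    (ε δ M : ℝ) (hε0 : 0 ≤ ε) (hδ : 0 ≤ δ) (hM : 0 ≤ M)
    (hclose : ∀ S : Set Ω, MeasurableSet S →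
      (μ S).toReal ≤ Real.exp ε * (ν S).toReal + δ)
    (g : Ω → ℝ) (hg : Measurable g) (hrange : ∀ ω, g ω ∈ Set.Icc 0 M) :
    (∫ ω, g ω ∂μ) - (∫ ω, g ω ∂ν) ≤ (Real.exp ε - 1 + δ) * M := by
  have hg0 : ∀ ω, 0 ≤ g ω := fun ω => (hrange ω).1
  have hgM : ∀ ω, g ω ≤ M := fun ω => (hrange ω).2
  have hint : ∀ (π : Measure Ω) [IsProbabilityMeasure π], Integrable g π := by
    intro π _
    refine Integrable.mono' (integrable_const M) hg.aestronglyMeasurable ?_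
    filter_upwards with ω
    rw [Real.norm_eq_abs, abs_of_nonneg (hg0 ω)]; exact hgM ω
  have layer : ∀ (π : Measure Ω) [IsProbabilityMeasure π],
      ∫ ω, g ω ∂π = ∫ t in Set.Ioc 0 M, ((π {a | t ≤ g a}).toReal) := by
    intro π _
    exact (hint π).integral_eq_integral_Ioc_meas_le
      (Filter.Eventually.of_forall hg0) (Filter.Eventually.of_forall hgM)
  -- measurability of the tail functions
  have meas : ∀ (π : Measure Ω), Measurable (fun t : ℝ => (π {a | t ≤ g a}).toReal) := by
    intro π
    refine Measurable.ennreal_toReal ?_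
    exact Antitone.measurable (fun s t hst => measure_mono (fun a h => le_trans hst h))
  have intble : ∀ (π : Measure Ω) [IsProbabilityMeasure π],
      IntegrableOn (fun t : ℝ => (π {a | t ≤ g a}).toReal) (Set.Ioc 0 M) := by
    intro π _
    refine Integrable.mono' (integrable_const 1) (meas π).aestronglyMeasurable ?_
    filter_upwards with t
    rw [Real.norm_eq_abs, abs_of_nonneg ENNReal.toReal_nonneg]
    have := prob_le_one (μ := π) (s := {a | t ≤ g a})
    simpa using ENNReal.toReal_le_of_le_ofReal one_pos.le (by simpa using this)
  have hmeasset : ∀ t : ℝ, MeasurableSet {a : Ω | t ≤ g a} := by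
    intro t; exact hg measurableSet_Ici
  have key : ∫ ω, g ω ∂μ ≤ Real.exp ε * ∫ ω, g ω ∂ν + δ * M := by
    rw [layer μ, layer ν]
    have h1 : ∫ t in Set.Ioc 0 M, ((μ {a | t ≤ g a}).toReal)
        ≤ ∫ t in Set.Ioc 0 M, (Real.exp ε * (ν {a | t ≤ g a}).toReal + δ) := by
      refine setIntegral_mono_on (intble μ) ?_ measurableSet_Ioc ?_
      · exact ((intble ν).const_mul _).add (integrable_const δ)
      · intro t _; exact hclose _ (hmeasset t)
    refine h1.trans (le_of_eq ?_)
    rw [integral_add ((intble ν).const_mul _) (integrable_const δ),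
      integral_const_mul, setIntegral_const]
    simp [Real.volume_Ioc, ENNReal.toReal_ofReal hM, mul_comm, hM]
  have hνle : ∫ ω, g ω ∂ν ≤ M := by
    calc ∫ ω, g ω ∂ν ≤ ∫ _, M ∂ν :=
          integral_mono (hint ν) (integrable_const M) hgM
      _ = M := by simp
  have hν0 : 0 ≤ ∫ ω, g ω ∂ν := integral_nonneg hg0
  have hexp : 1 ≤ Real.exp ε := Real.one_le_exp hε0
  nlinarith [key, hνle, hν0, hexp]

/-- If `μ` and `ν` are (ε,δ)-max-KL close probability measures (with `ε ∈ [0,1]`)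
and `g` is a measurable function into `[0, M]`, then
`|E_μ[g] − E_ν[g]| ≤ (e^ε − 1 + δ)·M`. -/
theorem abs_integral_sub_le_of_maxKL_close
    {Ω : Type*} [MeasurableSpace Ω] (μ ν : Measure Ω)
    [IsProbabilityMeasure μ] [IsProbabilityMeasure ν]
    (ε δ M : ℝ) (hε0 : 0 ≤ ε) (hε1 : ε ≤ 1) (hδ : 0 ≤ δ) (hM : 0 ≤ M)
    (hclose₁ : ∀ S : Set Ω, MeasurableSet S →
      (μ S).toReal ≤ Real.exp ε * (ν S).toReal + δ)
    (hclose₂ : ∀ S : Set Ω, MeasurableSet S →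
      (ν S).toReal ≤ Real.exp ε * (μ S).toReal + δ)
    (g : Ω → ℝ) (hg : Measurable g) (hrange : ∀ ω, g ω ∈ Set.Icc 0 M) :
    |(∫ ω, g ω ∂μ) - (∫ ω, g ω ∂ν)| ≤ (Real.exp ε - 1 + δ) * M := by
  rw [abs_sub_le_iff]
  exact ⟨one_side_maxKL μ ν ε δ M hε0 hδ hM hclose₁ g hg hrange,
    one_side_maxKL ν μ ε δ M hε0 hδ hM hclose₂ g hg hrange⟩
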